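/- An abelian group A is torsion-free (no nonzero element of A has finite order) if and only if A embeds into a direct product of (possibly infinitely many) copies of ℚ, i.e., there is an index set J and an injective additive group homomorphism A → ℚ^J. -/

import Mathlib

universe u

/-- An abelian group is torsion-free if and only if it embeds into a direct product of
copies of `ℚ`. -/
theorem isTorsionFree_iff_embeds_in_product_of_rat (A : Type u) [AddCommGroup A] :
    (∀ g : A, g ≠ 0 → ¬IsOfFinAddOrder g) ↔
      ∃ (J : Type u) (f : A →+ (J → ℚ)), Function.Injective f := by
  constructor
  · intro htf
    have : NoZeroSMulDivisors ℤ A :=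
      have := isAddTorsionFree_iff_not_isOfFinAddOrder.2 htf; IsAddTorsionFree.to_noZeroSMulDivisors_int
    -- tensor with ℚ
    set V := TensorProduct ℤ ℚ A with hV
    let f : A →ₗ[ℤ] V := TensorProduct.mk ℤ ℚ A 1
    have hbc : IsBaseChange ℚ f := TensorProduct.isBaseChange ℤ A ℚ
    have hloc : IsLocalizedModule (nonZeroDivisors ℤ) f :=
      (isLocalizedModule_iff_isBaseChange (nonZeroDivisors ℤ) ℚ f).2 hbc
    have hfinj : Function.Injective f := by
      intro a b hab
      have : f (a - b) = 0 := by rw [map_sub, hab, sub_self]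
      rw [IsLocalizedModule.eq_zero_iff (nonZeroDivisors ℤ)] at this
      obtain ⟨⟨s, hs⟩, hsa⟩ := this
      have hs0 : (s : ℤ) ≠ 0 := nonZeroDivisors.ne_zero hs
      have := (smul_eq_zero.mp hsa).resolve_left hs0
      exact sub_eq_zero.mp this
    -- V is a ℚ-vector space; pick a basis
    let b := Module.Basis.ofVectorSpace ℚ V
    let J : Type u := ↥(Module.Basis.ofVectorSpaceIndex ℚ V)
    let g : V →+ (J → ℚ) :=
      { toFun := fun v => (b.repr v : J → ℚ)
        map_zero' := by simp
        map_add' := by intro x y; simp }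
    have hginj : Function.Injective g := by
      intro x y hxy
      apply b.repr.injective
      exact DFunLike.coe_injective hxy
    exact ⟨J, g.comp f.toAddMonoidHom, hginj.comp hfinj⟩
  · rintro ⟨J, f, hf⟩
    have htf : ∀ g : (J → ℚ), g ≠ 0 → ¬IsOfFinAddOrder g :=
      fun _ hg =>
        not_isOfFinAddOrder_of_isAddTorsionFree hg
    intro a ha hfa
    refine htf (f a) ?_ (f.isOfFinAddOrder hfa)
    intro h0
    exact ha (hf (by rw [h0, map_zero]))
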